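/- (Extension Lemma) Let Ω ⊆ ℍ be a symmetric slice domain, I ∈ S, and f_I : Ω ∩ L_I → ℍ a holomorphic function (with values in ℍ). Then the formula f(x+yJ) = ½[f_I(x+yI) + f_I(x−yI)] + J(I/2)[f_I(x−yI) − f_I(x+yI)] defines the unique slice regular function f : Ω → ℍ extending f_I. -/

import Mathlib

noncomputable section

abbrev H := Quaternion ℝ

/-- The sphere of quaternion imaginary units. -/
def Sph : Set H := {q : H | q ^ 2 = -1}

/-- The complex line (Slice) through 1 and `I`. -/
def Slice (I : H) : Set H := {q : H | ∃ x y : ℝ, q = (x : H) + y • I}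

/-- The 2-sphere `x + y𝕊`. -/
def sphSet (x y : ℝ) : Set H := {q : H | ∃ I ∈ Sph, q = (x : H) + y • I}

/-- The real axis inside the quaternions. -/
def realAxis : Set H := {q : H | ∃ r : ℝ, q = (r : H)}

/-- `f` is holomorphic on the `I`-Slice of `Ω`: at every point of `Ω ∩ L_I` the
map `(x,y) ↦ f(x+yI)` is (real) differentiable and satisfies the
Cauchy–Riemann equation `∂f/∂x + I ∂f/∂y = 0`. -/
def HoloSlice (Ω : Set H) (f : H → H) (I : H) : Prop :=
  ∀ x y : ℝ, (x : H) + y • I ∈ Ω →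
    DifferentiableAt ℝ (fun p : ℝ × ℝ => f ((p.1 : H) + p.2 • I)) (x, y) ∧
    fderiv ℝ (fun p : ℝ × ℝ => f ((p.1 : H) + p.2 • I)) (x, y) (1, 0)
      + I * fderiv ℝ (fun p : ℝ × ℝ => f ((p.1 : H) + p.2 • I)) (x, y) (0, 1) = 0

/-- Slice regular functions: every Slice restriction is holomorphic. -/
def SliceRegular (Ω : Set H) (f : H → H) : Prop :=
  ∀ I ∈ Sph, HoloSlice Ω f I

/-- A Slice domain: a domain intersecting the real axis whose slices are domains. -/
def IsSliceDomain (Ω : Set H) : Prop :=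
  IsOpen Ω ∧ IsConnected Ω ∧ (Ω ∩ realAxis).Nonempty ∧
  ∀ I ∈ Sph, IsConnected (Ω ∩ Slice I)

/-- Axially symmetric set. -/
def AxSymm (C : Set H) : Prop :=
  ∀ (x y : ℝ), ∀ I ∈ Sph, (x : H) + y • I ∈ C → ∀ J ∈ Sph, (x : H) + y • J ∈ C

/-- Symmetric Slice domain. -/
def IsSymmSliceDomain (Ω : Set H) : Prop := IsSliceDomain Ω ∧ AxSymm Ω

/-- Orthogonality of quaternions w.r.t. the Euclidean inner product `re (p * star q)`. -/
def Orth (I J : H) : Prop := (I * star J).re = 0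

/-- `F, G` give a splitting `f = F + G J` of `f` on the Slice `Ω ∩ L_I`,
with `F, G` holomorphic and `L_I`-valued. -/
structure IsSplitting (Ω : Set H) (f : H → H) (I J : H) (F G : H → H) : Prop where
  mapsF : ∀ q ∈ Ω ∩ Slice I, F q ∈ Slice I
  mapsG : ∀ q ∈ Ω ∩ Slice I, G q ∈ Slice I
  holoF : HoloSlice Ω F I
  holoG : HoloSlice Ω G I
  eq : ∀ q ∈ Ω ∩ Slice I, f q = F q + G q * J

/-- `h` is the regular product `f * g`: it is Slice regular and restricts on some
Slice `L_I` (with `I ⊥ J`, splittings `f = F + GJ`, `g = F' + G'J`) to the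
product formula.  (Note `star` is quaternionic conjugation, which restricts to
complex conjugation on each Slice.) -/
def IsRegularProduct (Ω : Set H) (f g h : H → H) : Prop :=
  SliceRegular Ω h ∧
  ∃ I ∈ Sph, ∃ J ∈ Sph, Orth I J ∧
    ∃ F G F' G' : H → H, IsSplitting Ω f I J F G ∧ IsSplitting Ω g I J F' G' ∧
      ∀ q ∈ Ω ∩ Slice I,
        h q = (F q * F' q - G q * star (G' (star q)))
            + (F q * G' q + G q * star (F' (star q))) * J

/-- `fc` is the regular conjugate of `f`. -/
def IsRegularConj (Ω : Set H) (f fc : H → H) : Prop :=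
  SliceRegular Ω fc ∧
  ∃ I ∈ Sph, ∃ J ∈ Sph, Orth I J ∧
    ∃ F G : H → H, IsSplitting Ω f I J F G ∧
      ∀ q ∈ Ω ∩ Slice I, fc q = star (F (star q)) - G q * J

/-- `fs` is the symmetrization `f^s = f * f^c` of `f`. -/
def IsSymmetrization (Ω : Set H) (f fs : H → H) : Prop :=
  ∃ fc : H → H, IsRegularConj Ω f fc ∧ IsRegularProduct Ω f fc fs

/-- The degenerate set of `f`: union of the spheres `x + y𝕊` (`y ≠ 0`)
contained in `Ω` on which `f` is constant. -/
def DegSet (Ω : Set H) (f : H → H) : Set H :=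
  {q : H | ∃ x y : ℝ, y ≠ 0 ∧ q ∈ sphSet x y ∧ sphSet x y ⊆ Ω ∧
    ∀ p ∈ sphSet x y, ∀ p' ∈ sphSet x y, f p = f p'}


section ExtAux

open RealInnerProductSpace

lemma sph_basic {J : H} (hJ : J ∈ Sph) : J.re = 0 ∧ ‖J‖ = 1 := by
  have h := hJ
  simp only [Sph, Set.mem_setOf_eq, pow_two, Quaternion.ext_iff, Quaternion.re_mul,
    Quaternion.imI_mul, Quaternion.imJ_mul, Quaternion.imK_mul,
    Quaternion.re_neg, Quaternion.imI_neg, Quaternion.imJ_neg, Quaternion.imK_neg,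
    Quaternion.re_one, Quaternion.imI_one, Quaternion.imJ_one, Quaternion.imK_one] at h
  obtain ⟨h1, h2, h3, h4⟩ := h
  have hre : J.re = 0 := by
    nlinarith [sq_nonneg J.re, sq_nonneg J.imI, sq_nonneg J.imJ, sq_nonneg J.imK]
  refine ⟨hre, ?_⟩
  have h5 : ‖J‖ * ‖J‖ = 1 := by
    rw [← Quaternion.normSq_eq_norm_mul_self, Quaternion.normSq_def']
    nlinarith
  nlinarith [norm_nonneg J]

lemma sph_re {J : H} (hJ : J ∈ Sph) : J.re = 0 := (sph_basic hJ).1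
lemma sph_norm {J : H} (hJ : J ∈ Sph) : ‖J‖ = 1 := (sph_basic hJ).2
lemma sph_mul_self {J : H} (hJ : J ∈ Sph) : J * J = -1 := by
  have := hJ; rwa [Sph, Set.mem_setOf_eq, pow_two] at this
lemma sph_neg {J : H} (hJ : J ∈ Sph) : -J ∈ Sph := by
  simp only [Sph, Set.mem_setOf_eq] at hJ ⊢; rw [← hJ]; exact neg_sq J
lemma sph_im {J : H} (hJ : J ∈ Sph) : J.im = J := by
  have h := sph_re hJ
  ext <;> simp [h]
lemma sph_star {J : H} (hJ : J ∈ Sph) : star J = -J := by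
  have h := sph_re hJ
  ext <;> simp [h]

lemma mem_sph {v : H} (hre : v.re = 0) (hn : ‖v‖ = 1) : v ∈ Sph := by
  have hns : Quaternion.normSq v = 1 := by
    rw [Quaternion.normSq_eq_norm_mul_self, hn, mul_one]
  rw [Quaternion.normSq_def'] at hns
  simp only [Sph, Set.mem_setOf_eq, pow_two, Quaternion.ext_iff, Quaternion.re_mul,
    Quaternion.imI_mul, Quaternion.imJ_mul, Quaternion.imK_mul,
    Quaternion.re_neg, Quaternion.imI_neg, Quaternion.imJ_neg, Quaternion.imK_neg,
    Quaternion.re_one, Quaternion.imI_one, Quaternion.imJ_one, Quaternion.imK_one, hre]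
  refine ⟨by nlinarith, by ring, by ring, by ring⟩

lemma pt_re {J : H} (hJ : J ∈ Sph) (x y : ℝ) : ((x:H) + y • J).re = x := by
  simp [sph_re hJ]
lemma pt_im {J : H} (hJ : J ∈ Sph) (x y : ℝ) : ((x:H) + y • J).im = y • J := by
  rw [Quaternion.im_add, Quaternion.im_coe, Quaternion.im_smul, sph_im hJ, zero_add]

/-- the extension -/
def extQ (fI : H → H) (I : H) (q : H) : H :=
  (2:ℝ)⁻¹ • (fI ((q.re:H) + ‖q.im‖ • I) + fI ((q.re:H) + (-‖q.im‖) • I))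
  + (‖q.im‖⁻¹ • q.im) *
      ((2:ℝ)⁻¹ • (I * (fI ((q.re:H) + (-‖q.im‖) • I) - fI ((q.re:H) + ‖q.im‖ • I))))

lemma extQ_formula (fI : H → H) (I : H) {J : H} (hJ : J ∈ Sph) (x y : ℝ) :
    extQ fI I ((x:H) + y • J)
      = (2:ℝ)⁻¹ • (fI ((x:H) + y • I) + fI ((x:H) + (-y) • I))
        + J * ((2:ℝ)⁻¹ • (I * (fI ((x:H) + (-y) • I) - fI ((x:H) + y • I)))) := by
  have hn : ‖y • J‖ = |y| := by
    rw [norm_smul, sph_norm hJ, mul_one, Real.norm_eq_abs]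
  unfold extQ
  rw [pt_re hJ, pt_im hJ, hn]
  rcases lt_trichotomy y 0 with hy | hy | hy
  · rw [abs_of_neg hy]
    have h1 : (-y)⁻¹ • (y • J) = -J := by
      rw [smul_smul]
      have : (-y)⁻¹ * y = -1 := by field_simp; rw [div_self (ne_of_lt hy)]
      rw [this, neg_one_smul]
    rw [h1, neg_neg]
    have h2 : ∀ A B : H, (-J) * ((2:ℝ)⁻¹ • (I * (A - B))) = J * ((2:ℝ)⁻¹ • (I * (B - A))) := by
      intro A B
      rw [neg_mul, ← mul_neg, ← smul_neg, ← mul_neg, neg_sub]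
    rw [h2, add_comm (fI ((x:H) + (-y) • I)) (fI ((x:H) + y • I))]
  · subst hy
    simp
  · rw [abs_of_pos hy]
    have h1 : y⁻¹ • (y • J) = J := by
      rw [smul_smul, inv_mul_cancel₀ (ne_of_gt hy), one_smul]
    rw [h1]

lemma extQ_slice (fI : H → H) {I : H} (hI : I ∈ Sph) {q : H} (hq : q ∈ Slice I) :
    extQ fI I q = fI q := by
  obtain ⟨x, y, rfl⟩ := hq
  rw [extQ_formula fI I hI]
  have hII := sph_mul_self hI
  have key : I * ((2:ℝ)⁻¹ • (I * (fI ((x:H) + (-y) • I) - fI ((x:H) + y • I))))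
      = -((2:ℝ)⁻¹ • (fI ((x:H) + (-y) • I) - fI ((x:H) + y • I))) := by
    rw [mul_smul_comm, ← mul_assoc, hII, neg_one_mul, smul_neg]
  rw [key]
  generalize fI ((x:H) + y • I) = A
  generalize fI ((x:H) + (-y) • I) = B
  module

lemma re_mul_comm (a b : H) : (a * b).re = (b * a).re := by
  simp only [Quaternion.re_mul]; ring

lemma inner_J_left {J : H} (hJ : J ∈ Sph) (a b : H) : ⟪J * a, b⟫ = -⟪a, J * b⟫ := by
  rw [Quaternion.inner_def, Quaternion.inner_def, star_mul, sph_star hJ]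
  simp only [mul_neg, Quaternion.re_neg, neg_neg]
  conv_lhs => rw [mul_assoc, re_mul_comm, mul_assoc]

lemma inner_J_J {J : H} (hJ : J ∈ Sph) (a b : H) : ⟪J * a, J * b⟫ = ⟪a, b⟫ := by
  rw [inner_J_left hJ, ← mul_assoc, sph_mul_self hJ, neg_one_mul, inner_neg_right, neg_neg]

lemma slice_eq (Ω : Set H) (hop : IsOpen Ω) {J : H} (hJ : J ∈ Sph)
    (hsl : IsConnected (Ω ∩ Slice J))
    (g f : H → H) (hg : HoloSlice Ω g J) (hf : HoloSlice Ω f J)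
    (r₀ : ℝ) (hr₀ : (r₀ : H) ∈ Ω)
    (hagree : ∀ r : ℝ, (r : H) ∈ Ω → g (r : H) = f (r : H)) :
    ∀ q ∈ Ω ∩ Slice J, g q = f q := by
  set e : ℂ → H := fun z => ((z.re : ℝ) : H) + z.im • J with he
  have econt : Continuous e :=
    ((Quaternion.continuous_coe).comp Complex.continuous_re).add
      (Complex.continuous_im.smul continuous_const)
  set U : Set ℂ := e ⁻¹' Ω with hU
  have hUopen : IsOpen U := hop.preimage econt
  have hinner : ∀ x y : ℝ, ⟪(x : H) + y • J, J⟫ = y := by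
    intro x y
    have h1 : ⟪(x : H), J⟫ = 0 := by
      rw [Quaternion.inner_def]
      rw [sph_star hJ]
      simp [Quaternion.re_mul, sph_re hJ]
    have h2 : ⟪J, J⟫ = (1:ℝ) := by
      rw [real_inner_self_eq_norm_mul_norm, sph_norm hJ]; norm_num
    rw [inner_add_left, real_inner_smul_left, h1, h2]; ring
  set π : H → ℂ := fun w => (w.re : ℂ) + (⟪w, J⟫ : ℂ) * Complex.I with hπ
  have hπcont : Continuous π := by
    apply Continuous.add
    · exact Complex.continuous_ofReal.comp Quaternion.continuous_re
    · exact (Complex.continuous_ofReal.comp (continuous_id.inner continuous_const)).mul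
        continuous_const
  have heπ : ∀ w ∈ Slice J, e (π w) = w := by
    rintro w ⟨x, y, rfl⟩
    simp only [hπ, pt_re hJ, hinner]
    simp only [he]
    norm_num [Complex.add_re, Complex.ofReal_re, Complex.mul_re, Complex.I_re, Complex.I_im,
      Complex.ofReal_im, Complex.add_im, Complex.mul_im]
  have hUeq : U = π '' (Ω ∩ Slice J) := by
    apply Set.Subset.antisymm
    · intro z hz
      refine ⟨e z, ⟨hz, ⟨z.re, z.im, rfl⟩⟩, ?_⟩
      simp only [hπ, he, pt_re hJ, hinner]
      exact Complex.re_add_im z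
    · rintro z ⟨w, ⟨hwΩ, hwS⟩, rfl⟩
      show e (π w) ∈ Ω
      rw [heπ w hwS]; exact hwΩ
  have hUconn : IsPreconnected U := by
    rw [hUeq]; exact (hsl.image π hπcont.continuousOn).isPreconnected
  set δ : ℂ → H := fun z => g (e z) - f (e z) with hδ
  have hmem0 : ((r₀ : ℝ) : ℂ) ∈ U := by
    show e _ ∈ Ω
    simp only [he, Complex.ofReal_re, Complex.ofReal_im, zero_smul, add_zero]
    exact hr₀
  have main : ∀ u : H, ∀ z ∈ U, ⟪u, δ z⟫ = 0 := by
    intro u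
    set Lu : H →L[ℝ] ℂ := Complex.ofRealCLM.comp ((innerSL ℝ) u)
        + Complex.I • (Complex.ofRealCLM.comp ((innerSL ℝ) (J * u))) with hLu
    set h : ℂ → ℂ := fun z => Lu (δ z) with hh
    have hdiff : DifferentiableOn ℂ h U := by
      intro z hz
      apply DifferentiableAt.differentiableWithinAt
      have hzΩ : ((z.re : ℝ) : H) + z.im • J ∈ Ω := hz
      obtain ⟨hgd, hgcr⟩ := hg z.re z.im hzΩ
      obtain ⟨hfd, hfcr⟩ := hf z.re z.im hzΩ
      set D := fderiv ℝ (fun p : ℝ × ℝ => g ((p.1 : H) + p.2 • J)) (z.re, z.im)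
          - fderiv ℝ (fun p : ℝ × ℝ => f ((p.1 : H) + p.2 • J)) (z.re, z.im) with hD
      have hDh : HasFDerivAt
          (fun p : ℝ × ℝ => g ((p.1 : H) + p.2 • J) - f ((p.1 : H) + p.2 • J)) D
          (z.re, z.im) := hgd.hasFDerivAt.sub hfd.hasFDerivAt
      set ρ : ℂ →L[ℝ] ℝ × ℝ := Complex.reCLM.prod Complex.imCLM with hρ
      have h1 : HasFDerivAt (fun w : ℂ =>
          g (((w.re : ℝ) : H) + w.im • J) - f (((w.re : ℝ) : H) + w.im • J))
          (D.comp ρ) z := by have := HasFDerivAt.comp z hDh ρ.hasFDerivAt; exact this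
      have h2 : HasFDerivAt h (Lu.comp (D.comp ρ)) z := HasFDerivAt.comp z Lu.hasFDerivAt h1
      have hCR : D (1, 0) + J * D (0, 1) = 0 := by
        rw [hD]
        simp only [ContinuousLinearMap.coe_sub', Pi.sub_apply, mul_sub]
        rw [sub_add_sub_comm, hgcr, hfcr, sub_zero]
      have hd2 : D (0, 1) = J * D (1, 0) := by
        have h3 : D (1, 0) = -(J * D (0, 1)) := eq_neg_of_add_eq_zero_left hCR
        rw [h3, mul_neg, ← mul_assoc, sph_mul_self hJ, neg_one_mul, neg_neg]
      set c : ℂ := Lu (D (1, 0)) with hc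
      refine HasFDerivAt.differentiableAt (f' := c • (1 : ℂ →L[ℂ] ℂ)) ?_
      apply hasFDerivAt_of_restrictScalars ℝ h2
      apply ContinuousLinearMap.ext
      intro w
      have hw : w = w.re • (1 : ℂ) + w.im • Complex.I := by
        rw [Complex.real_smul, Complex.real_smul, mul_one, Complex.re_add_im]
      rw [hw, map_add, map_add, map_smul, map_smul, map_smul, map_smul]
      have hval1 : (ContinuousLinearMap.restrictScalars ℝ (c • (1 : ℂ →L[ℂ] ℂ))) (1 : ℂ)
          = (Lu.comp (D.comp ρ)) (1 : ℂ) := by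
        simp only [ContinuousLinearMap.coe_restrictScalars', ContinuousLinearMap.coe_smul',
          Pi.smul_apply, ContinuousLinearMap.one_apply, smul_eq_mul, mul_one,
          ContinuousLinearMap.coe_comp', Function.comp_apply]
        have hρ1 : ρ (1 : ℂ) = ((1 : ℝ), (0 : ℝ)) := by
          simp [hρ, ContinuousLinearMap.prod_apply]
        rw [hρ1, hc]
      have hvalI : (ContinuousLinearMap.restrictScalars ℝ (c • (1 : ℂ →L[ℂ] ℂ))) Complex.I
          = (Lu.comp (D.comp ρ)) Complex.I := by
        simp only [ContinuousLinearMap.coe_restrictScalars', ContinuousLinearMap.coe_smul',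
          Pi.smul_apply, ContinuousLinearMap.one_apply, smul_eq_mul,
          ContinuousLinearMap.coe_comp', Function.comp_apply]
        have hρI : ρ Complex.I = ((0 : ℝ), (1 : ℝ)) := by
          simp [hρ, ContinuousLinearMap.prod_apply]
        rw [hρI, hd2, hc]
        -- goal : Lu (D (1,0)) * I = Lu (J * D (1,0))
        set d := D (1, 0)
        have e1 : ⟪u, J * d⟫ = -⟪J * u, d⟫ := by
          rw [real_inner_comm, inner_J_left hJ, real_inner_comm]
        have e2 : ⟪J * u, J * d⟫ = ⟪u, d⟫ := by
          rw [real_inner_comm, inner_J_J hJ, real_inner_comm]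
        simp only [hLu, ContinuousLinearMap.add_apply, ContinuousLinearMap.coe_comp',
          Function.comp_apply, Complex.ofRealCLM_apply, ContinuousLinearMap.coe_smul',
          Pi.smul_apply, innerSL_apply_apply, smul_eq_mul, e1, e2]
        push_cast
        ring_nf
        linear_combination ((⟪J * u, d⟫ : ℝ) : ℂ) * Complex.I_sq
      rw [hval1, hvalI]
    have hanalytic := hdiff.analyticOnNhd hUopen
    have hfreq : ∃ᶠ z in nhdsWithin ((r₀ : ℝ) : ℂ) {((r₀ : ℝ) : ℂ)}ᶜ, h z = 0 := by
      obtain ⟨ε, hε, hball⟩ := Metric.isOpen_iff.mp hop (r₀ : H) hr₀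
      have hval : ∀ t : ℝ, |t| < ε → h ((r₀ : ℂ) + (t : ℂ)) = 0 := by
        intro t ht
        have hez : e ((r₀ : ℂ) + (t : ℂ)) = ((r₀ + t : ℝ) : H) := by
          simp only [he, Complex.add_re, Complex.ofReal_re, Complex.add_im, Complex.ofReal_im,
            add_zero, zero_smul]
        have hmem : ((r₀ + t : ℝ) : H) ∈ Ω := by
          apply hball
          rw [Metric.mem_ball, dist_eq_norm]
          have h7 : ((r₀ + t : ℝ) : H) - ((r₀ : ℝ) : H) = ((t : ℝ) : H) := by push_cast; abel
          rw [h7, Quaternion.norm_coe, Real.norm_eq_abs]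
          exact ht
        have hδ0 : δ ((r₀ : ℂ) + (t : ℂ)) = 0 := by
          simp only [hδ, hez, hagree _ hmem, sub_self]
        simp only [hh, hδ0, map_zero]
      have htend : Filter.Tendsto (fun t : ℝ => (r₀ : ℂ) + (t : ℂ))
          (nhdsWithin (0 : ℝ) {(0:ℝ)}ᶜ) (nhdsWithin ((r₀ : ℝ) : ℂ) {((r₀ : ℝ) : ℂ)}ᶜ) := by
        rw [nhdsWithin, nhdsWithin]
        apply Filter.tendsto_inf.mpr
        constructor
        · apply Filter.Tendsto.mono_left _ inf_le_left
          have hcont : Continuous fun t : ℝ => (r₀ : ℂ) + ((t : ℝ) : ℂ) :=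
            continuous_const.add Complex.continuous_ofReal
          have h8 := hcont.tendsto (0 : ℝ)
          simpa using h8
        · apply Filter.tendsto_principal.mpr
          apply Filter.eventually_inf_principal.mpr
          apply Filter.Eventually.of_forall
          intro t ht
          simp only [Set.mem_compl_iff, Set.mem_singleton_iff] at ht ⊢
          intro hcon
          apply ht
          have h5 : (r₀ : ℂ) + (t : ℂ) = (r₀ : ℂ) + 0 := by rw [add_zero]; exact hcon
          have h6 : ((t : ℝ) : ℂ) = 0 := add_left_cancel h5
          exact_mod_cast h6
      have hev : ∀ᶠ (t : ℝ) in nhds (0 : ℝ), h ((r₀ : ℂ) + ((t : ℝ) : ℂ)) = 0 := by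
        have hb : Metric.ball (0:ℝ) ε ∈ nhds (0:ℝ) := Metric.ball_mem_nhds _ hε
        filter_upwards [hb] with t ht
        apply hval
        simpa [Real.dist_eq] using ht
      have hev2 : ∀ᶠ (t : ℝ) in nhdsWithin (0 : ℝ) {(0:ℝ)}ᶜ, h ((r₀ : ℂ) + ((t : ℝ) : ℂ)) = 0 :=
        Filter.Eventually.filter_mono nhdsWithin_le_nhds hev
      exact htend.frequently hev2.frequently
    have hzero := hanalytic.eqOn_zero_of_preconnected_of_frequently_eq_zero hUconn hmem0 hfreq
    intro z hz
    have h0 : Lu (δ z) = 0 := hzero hz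
    have h1 := congrArg Complex.re h0
    simpa only [hLu, ContinuousLinearMap.add_apply, ContinuousLinearMap.coe_comp',
      Function.comp_apply, Complex.ofRealCLM_apply, ContinuousLinearMap.coe_smul',
      Pi.smul_apply, innerSL_apply_apply, smul_eq_mul, Complex.add_re, Complex.ofReal_re,
      Complex.mul_re, Complex.I_re, Complex.I_im, Complex.ofReal_im, Complex.zero_re,
      mul_zero, zero_mul, sub_zero, add_zero, mul_one, zero_sub, mul_comm] using h1
  rintro q ⟨hqΩ, x, y, rfl⟩
  have hz : (⟨x, y⟩ : ℂ) ∈ U := by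
    show ((((⟨x, y⟩ : ℂ).re : ℝ)) : H) + (⟨x, y⟩ : ℂ).im • J ∈ Ω
    exact hqΩ
  have hδz : δ ⟨x, y⟩ = 0 := by
    have h := main (δ ⟨x, y⟩) ⟨x, y⟩ hz
    exact inner_self_eq_zero.mp h
  have : g ((x : H) + y • J) - f ((x : H) + y • J) = 0 := hδz
  exact sub_eq_zero.mp this

lemma extQ_regular (Ω : Set H) (hax : AxSymm Ω) {I : H} (hI : I ∈ Sph)
    (fI : H → H) (hfI : HoloSlice Ω fI I) : SliceRegular Ω (extQ fI I) := by
  intro J hJ x y hmem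
  have hII := sph_mul_self hI
  have hJJ := sph_mul_self hJ
  set A : ℝ × ℝ → H := fun p => fI ((p.1:H) + p.2 • I) with hA
  have hfun : (fun p : ℝ × ℝ => extQ fI I ((p.1:H) + p.2 • J))
      = fun p : ℝ × ℝ => (2:ℝ)⁻¹ • (A p + A (p.1, -p.2))
          + J * ((2:ℝ)⁻¹ • (I * (A (p.1, -p.2) - A p))) := by
    funext p
    exact extQ_formula fI I hJ p.1 p.2
  have hmI : (x:H) + y • I ∈ Ω := hax x y J hJ hmem I hI
  have hmI' : (x:H) + (-y) • I ∈ Ω := by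
    have h1 : (x:H) + y • (-I) ∈ Ω := hax x y J hJ hmem (-I) (sph_neg hI)
    rwa [smul_neg, ← neg_smul] at h1
  obtain ⟨hd1, hcr1⟩ := hfI x y hmI
  obtain ⟨hd2, hcr2⟩ := hfI x (-y) hmI'
  set σ : ℝ × ℝ →L[ℝ] ℝ × ℝ :=
    (ContinuousLinearMap.fst ℝ ℝ ℝ).prod (-(ContinuousLinearMap.snd ℝ ℝ ℝ)) with hσ
  set DA := fderiv ℝ A (x, y) with hDA
  set DB := fderiv ℝ A (x, -y) with hDB
  have hDAh : HasFDerivAt A DA (x, y) := hd1.hasFDerivAt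
  have hDBh : HasFDerivAt A DB (x, -y) := hd2.hasFDerivAt
  have hσh : HasFDerivAt (fun p : ℝ × ℝ => ((p.1 : ℝ), -p.2)) σ (x, y) := σ.hasFDerivAt
  have hBh : HasFDerivAt (fun p : ℝ × ℝ => A (p.1, -p.2)) (DB.comp σ) (x, y) :=
    by have := HasFDerivAt.comp (x, y) hDBh hσh; exact this
  set LI := ContinuousLinearMap.mul ℝ H I with hLI
  set LJ := ContinuousLinearMap.mul ℝ H J with hLJ
  have hterm1 : HasFDerivAt (fun p : ℝ × ℝ => (2:ℝ)⁻¹ • (A p + A (p.1, -p.2)))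
      ((2:ℝ)⁻¹ • (DA + DB.comp σ)) (x, y) := by have := (hDAh.add hBh).const_smul (2:ℝ)⁻¹; exact this
  have hterm2 : HasFDerivAt (fun p : ℝ × ℝ => J * ((2:ℝ)⁻¹ • (I * (A (p.1, -p.2) - A p))))
      (LJ.comp ((2:ℝ)⁻¹ • (LI.comp (DB.comp σ - DA)))) (x, y) := by
    apply HasFDerivAt.comp (x, y) LJ.hasFDerivAt
    have := (HasFDerivAt.comp (x, y) LI.hasFDerivAt (hBh.sub hDAh)).const_smul (2:ℝ)⁻¹; exact this
  have hg : HasFDerivAt (fun p : ℝ × ℝ => extQ fI I ((p.1:H) + p.2 • J))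
      ((2:ℝ)⁻¹ • (DA + DB.comp σ) + LJ.comp ((2:ℝ)⁻¹ • (LI.comp (DB.comp σ - DA)))) (x, y) := by
    rw [hfun]; exact hterm1.add hterm2
  refine ⟨hg.differentiableAt, ?_⟩
  rw [hg.fderiv]
  have hneg : ((0:ℝ), (-1:ℝ)) = -((0:ℝ), (1:ℝ)) := by simp
  simp only [ContinuousLinearMap.add_apply, ContinuousLinearMap.coe_smul',
    Pi.smul_apply, ContinuousLinearMap.coe_comp', Function.comp_apply,
    ContinuousLinearMap.coe_sub', Pi.sub_apply, hσ, ContinuousLinearMap.prod_apply,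
    ContinuousLinearMap.coe_fst', ContinuousLinearMap.coe_snd',
    ContinuousLinearMap.neg_apply, neg_zero, hLI, hLJ, ContinuousLinearMap.mul_apply',
    hneg, map_neg]
  set a1 := DA (1, 0)
  set a2 := DA (0, 1)
  set b1 := DB (1, 0)
  set b2 := DB (0, 1)
  have ha1 : a1 = -(I * a2) := eq_neg_of_add_eq_zero_left hcr1
  have hb1 : b1 = -(I * b2) := eq_neg_of_add_eq_zero_left hcr2
  have ha2 : I * a1 = a2 := by rw [ha1, mul_neg, ← mul_assoc, hII, neg_one_mul, neg_neg]
  have hb2 : I * b1 = b2 := by rw [hb1, mul_neg, ← mul_assoc, hII, neg_one_mul, neg_neg]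
  rw [← ha2, ← hb2]
  have e1 : ∀ w : H, I * (I * w) = -w := fun w => by rw [← mul_assoc, hII, neg_one_mul]
  have e2 : ∀ w : H, J * (J * w) = -w := fun w => by rw [← mul_assoc, hJJ, neg_one_mul]
  simp only [mul_add, mul_sub, mul_neg, mul_smul_comm, e1, e2, smul_neg, smul_add, smul_sub,
    neg_neg, sub_neg_eq_add, neg_add_rev, neg_sub]
  abel

end ExtAux

/-- Extension Lemma: a holomorphic `f_I : Ω ∩ L_I → ℍ` extends,
via the stated formula, to a unique slice regular `f : Ω → ℍ`. -/
theorem extension_lemma (Ω : Set H) (hΩ : IsSymmSliceDomain Ω)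
    (I : H) (hI : I ∈ Sph) (fI : H → H) (hfI : HoloSlice Ω fI I) :
    ∃ f : H → H, SliceRegular Ω f ∧
      (∀ q ∈ Ω ∩ Slice I, f q = fI q) ∧
      (∀ x y : ℝ, ∀ J ∈ Sph, (x : H) + y • J ∈ Ω →
        f ((x : H) + y • J) =
          (2 : ℝ)⁻¹ • (fI ((x : H) + y • I) + fI ((x : H) + (-y) • I))
          + J * ((2 : ℝ)⁻¹ • (I * (fI ((x : H) + (-y) • I) - fI ((x : H) + y • I))))) ∧
      (∀ g : H → H, SliceRegular Ω g → (∀ q ∈ Ω ∩ Slice I, g q = fI q) →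
        Set.EqOn g f Ω) := by 
  obtain ⟨⟨hopen, hconn, hreal, hslices⟩, hax⟩ := hΩ
  have hfreg : SliceRegular Ω (extQ fI I) := extQ_regular Ω hax hI fI hfI
  refine ⟨extQ fI I, hfreg, ?_, ?_, ?_⟩
  · intro q hq; exact extQ_slice fI hI hq.2
  · intro x y J hJ _; exact extQ_formula fI I hJ x y
  · intro g hgreg hgag
    obtain ⟨p, hpΩ, r₀, rfl⟩ := hreal
    have hagree : ∀ r : ℝ, (r : H) ∈ Ω → g (r : H) = extQ fI I (r : H) := by
      intro r hr
      have hrS : (r : H) ∈ Slice I := ⟨r, 0, by rw [zero_smul, add_zero]⟩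
      rw [hgag _ ⟨hr, hrS⟩, extQ_slice fI hI hrS]
    intro q hq
    by_cases him : q.im = 0
    · have hq' : ((q.re : ℝ) : H) = q := by
        conv_rhs => rw [← Quaternion.re_add_im q]
        rw [him, add_zero]
      have hqS : q ∈ Slice I := ⟨q.re, 0, by rw [zero_smul, add_zero, hq']⟩
      rw [hgag _ ⟨hq, hqS⟩, extQ_slice fI hI hqS]
    · set J := ‖q.im‖⁻¹ • q.im with hJdef
      have hnim : ‖q.im‖ ≠ 0 := norm_ne_zero_iff.mpr him
      have hJ : J ∈ Sph := by
        apply mem_sph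
        · show (‖q.im‖⁻¹ • q.im).re = 0
          rw [Quaternion.re_smul, Quaternion.re_im, smul_zero]
        · rw [hJdef, norm_smul, norm_inv, norm_norm, inv_mul_cancel₀ hnim]
      have hqS : q ∈ Slice J := ⟨q.re, ‖q.im‖, by
        rw [hJdef, smul_smul, mul_inv_cancel₀ hnim, one_smul, Quaternion.re_add_im]⟩
      exact slice_eq Ω hopen hJ (hslices J hJ) g (extQ fI I) (hgreg J hJ) (hfreg J hJ)
        r₀ hpΩ hagree q ⟨hq, hqS⟩
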